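/- Let η > 0, let −π < q < p < 0, let (μ_j)_{j≥1} be a strictly increasing sequence of positive real numbers, and let (a_j)_{j≥1}, (b_j)_{j≥1} be sequences of real numbers. Let g_p, g_q : (0,η) → ℝ be measurable functions such that for every l ≥ 1 there exists a constant C_l > 0 with |g_p(r) − Σ_{j=1}^l a_j r^{μ_j}| ≤ C_l r^{μ_{l+1}} and |g_q(r) − Σ_{j=1}^l b_j r^{μ_j}| ≤ C_l r^{μ_{l+1}} for all 0 < r < η. Define J(τ) = −τ e^{−ip} ∫_0^η g_p(r) e^{rτ(sin p + i cos p)} dr + τ e^{−iq} ∫_0^η g_q(r) e^{rτ(sin q + i cos q)} dr. Then for every l ≥ 1, J(τ) = −i Σ_{j=1}^l e^{iπμ_j/2} Γ(1+μ_j) (a_j e^{ipμ_j} − b_j e^{iqμ_j}) τ^{−μ_j} + O(τ^{−μ_{l+1}}) as τ → ∞. -/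

import Mathlib

open MeasureTheory Filter Asymptotics

open Set Complex

/-- real integrability -/
lemma aux_int_real {ν δ : ℝ} (hν : -1 < ν) (hδ : 0 < δ) :
    IntegrableOn (fun r : ℝ => r ^ ν * Real.exp (-δ * r)) (Ioi 0) := by
  have := integrableOn_rpow_mul_exp_neg_mul_rpow hν zero_lt_one hδ
  refine this.congr_fun (fun x hx => by simp [Real.rpow_one]) measurableSet_Ioi

/-- complex integrability -/
lemma aux_int_cx {ν : ℝ} (hν : -1 < ν) {z : ℂ} (hz : 0 < z.re) :
    IntegrableOn (fun r : ℝ => ((r ^ ν : ℝ) : ℂ) * Complex.exp (-(z * r))) (Ioi 0) := by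
  have hm : AEStronglyMeasurable (fun r : ℝ => ((r ^ ν : ℝ) : ℂ) * Complex.exp (-(z * r)))
      (volume.restrict (Ioi 0)) := by
    apply Measurable.aestronglyMeasurable
    fun_prop
  refine Integrable.mono' (aux_int_real hν hz) hm ?_
  filter_upwards [ae_restrict_mem measurableSet_Ioi] with r hr
  have hr0 : (0:ℝ) < r := hr
  rw [norm_mul, Complex.norm_of_nonneg (Real.rpow_nonneg hr0.le ν),
    Complex.norm_exp]
  have : (-(z * r)).re = -z.re * r := by simp [Complex.mul_re]
  rw [this]

lemma aux_deriv {ν : ℝ} (hν : -1 < ν) {z₀ : ℂ} (hz : 0 < z₀.re) :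
    HasDerivAt (fun z : ℂ => ∫ r in Ioi (0:ℝ), ((r ^ ν : ℝ) : ℂ) * Complex.exp (-(z * r)))
      (-∫ r in Ioi (0:ℝ), ((r ^ (ν+1) : ℝ) : ℂ) * Complex.exp (-(z₀ * r))) z₀ := by
  set μvol := volume.restrict (Ioi (0:ℝ))
  have hε : 0 < z₀.re / 2 := by linarith
  have key := hasDerivAt_integral_of_dominated_loc_of_deriv_le (μ := μvol)
    (F := fun (z : ℂ) (r : ℝ) => ((r ^ ν : ℝ) : ℂ) * Complex.exp (-(z * r)))
    (F' := fun (z : ℂ) (r : ℝ) => -(((r ^ (ν+1) : ℝ) : ℂ) * Complex.exp (-(z * r))))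
    (x₀ := z₀) (s := Metric.ball z₀ (z₀.re / 2))
    (bound := fun r : ℝ => r ^ (ν+1) * Real.exp (-(z₀.re/2) * r)) (Metric.ball_mem_nhds z₀ hε)
    ?_ ?_ ?_ ?_ ?_ ?_
  · rcases key with ⟨-, hd⟩
    simpa [integral_neg] using hd
  · filter_upwards with z
    exact (Measurable.aestronglyMeasurable (by fun_prop))
  · exact aux_int_cx hν hz
  · exact (Measurable.aestronglyMeasurable (by fun_prop)).neg
  · filter_upwards [ae_restrict_mem measurableSet_Ioi] with r hr z hzb
    have hr0 : (0:ℝ) < r := hr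
    have hre : z₀.re / 2 < z.re := by
      have := Complex.abs_re_le_norm (z - z₀)
      have hd : ‖z - z₀‖ < z₀.re / 2 := by
        simpa [Complex.dist_eq] using mem_ball_iff_norm.mp hzb
      have : |z.re - z₀.re| < z₀.re / 2 := by
        calc |z.re - z₀.re| = |(z - z₀).re| := by simp
        _ ≤ ‖z - z₀‖ := Complex.abs_re_le_norm _
        _ < _ := hd
      have := abs_lt.mp this
      linarith [this.1]
    rw [norm_neg, norm_mul, Complex.norm_of_nonneg (Real.rpow_nonneg hr0.le _),
      Complex.norm_exp]
    have h1 : (-(z * r)).re = -z.re * r := by simp [Complex.mul_re]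
    rw [h1]
    gcongr
    all_goals nlinarith
  · exact aux_int_real (by linarith) hε
  · filter_upwards [ae_restrict_mem measurableSet_Ioi] with r hr z hzb
    have hr0 : (0:ℝ) < r := hr
    have h1 : HasDerivAt (fun z : ℂ => -(z * (r:ℂ))) (-(r:ℂ)) z := by
      simpa [Pi.neg_def] using ((hasDerivAt_id z).mul_const (r:ℂ)).neg
    have h2 := h1.cexp
    have h3 := h2.const_mul ((r ^ ν : ℝ) : ℂ)
    refine h3.congr_deriv (Eq.symm ?_)
    rw [Real.rpow_add hr0 ν 1, Real.rpow_one]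
    push_cast
    ring

lemma aux_ibp {ν : ℝ} (hν : -1 < ν) {z : ℂ} (hz : 0 < z.re) :
    ((ν:ℂ) + 1) * ∫ r in Ioi (0:ℝ), ((r ^ ν : ℝ) : ℂ) * Complex.exp (-(z * r))
      = z * ∫ r in Ioi (0:ℝ), ((r ^ (ν+1) : ℝ) : ℂ) * Complex.exp (-(z * r)) := by
  set f : ℝ → ℂ := fun r => ((r ^ (ν+1) : ℝ) : ℂ) * Complex.exp (-(z * r)) with hf
  set f' : ℝ → ℂ := fun r =>
    ((ν:ℂ)+1) * (((r ^ ν : ℝ) : ℂ) * Complex.exp (-(z * r)))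
      - z * (((r ^ (ν+1) : ℝ) : ℂ) * Complex.exp (-(z * r))) with hf'
  have hderiv : ∀ r ∈ Ioi (0:ℝ), HasDerivAt f (f' r) r := by
    intro r hr
    have hr0 : (0:ℝ) < r := hr
    have h1 : HasDerivAt (fun r : ℝ => ((r ^ (ν+1) : ℝ) : ℂ)) (((ν+1) * r ^ ν : ℝ) : ℂ) r := by
      have := (Real.hasDerivAt_rpow_const (p := ν+1) (Or.inl hr0.ne'))
      have h2 := this.ofReal_comp
      convert h2 using 1
      norm_num
    have h3 : HasDerivAt (fun r : ℝ => Complex.exp (-(z * r))) (-z * Complex.exp (-(z * r))) r := by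
      have hb : HasDerivAt (fun r : ℝ => -(z * (r:ℂ))) (-z) r := by
        have := (Complex.ofRealCLM.hasDerivAt (x := r)).const_mul z
        simpa [Pi.neg_def] using this.neg
      simpa [mul_comm] using hb.cexp
    have := h1.mul h3
    refine this.congr_deriv (Eq.symm ?_)
    rw [hf']
    push_cast
    ring
  have hcont : ContinuousWithinAt f (Ici 0) 0 := by
    apply ContinuousWithinAt.mul
    · have : ContinuousWithinAt (fun r : ℝ => r ^ (ν+1)) (Ici 0) 0 :=
        (Real.continuousAt_rpow_const 0 (ν+1) (Or.inr (by linarith))).continuousWithinAt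
      exact Complex.continuous_ofReal.continuousAt.comp_continuousWithinAt this
    · exact (Complex.continuous_exp.comp (by fun_prop)).continuousWithinAt
  have htend : Tendsto f atTop (nhds 0) := by
    rw [tendsto_zero_iff_norm_tendsto_zero]
    have hmain := tendsto_rpow_mul_exp_neg_mul_atTop_nhds_zero (ν+1) z.re hz
    apply squeeze_zero_norm' _ hmain
    filter_upwards [eventually_gt_atTop (0:ℝ)] with r hr0
    rw [norm_norm, norm_mul, Complex.norm_of_nonneg (Real.rpow_nonneg hr0.le _),
      Complex.norm_exp]
    have h1 : (-(z * r)).re = -z.re * r := by simp [Complex.mul_re]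
    rw [h1]
  have hint1 := aux_int_cx hν hz
  have hint2 := aux_int_cx (show (-1:ℝ) < ν + 1 by linarith) hz
  have hf'int : IntegrableOn f' (Ioi (0:ℝ)) := by
    exact ((hint1.const_mul _).sub (hint2.const_mul _))
  have := integral_Ioi_of_hasDerivAt_of_tendsto hcont hderiv hf'int htend
  have hf0 : f 0 = 0 := by
    simp [hf, Real.zero_rpow (by linarith : ν + 1 ≠ 0)]
  rw [hf0, sub_zero] at this
  rw [hf'] at this
  rw [integral_sub (hint1.const_mul _) (hint2.const_mul _),
    integral_const_mul, integral_const_mul] at this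
  have := sub_eq_zero.mp this
  exact this

lemma aux_key {ν : ℝ} (hν : -1 < ν) {z : ℂ} (hz : 0 < z.re) :
    ∫ r in Ioi (0:ℝ), ((r ^ ν : ℝ) : ℂ) * Complex.exp (-(z * r))
      = (Real.Gamma (ν+1) : ℂ) * z ^ (-((ν:ℂ)+1)) := by
  set U : Set ℂ := {w : ℂ | 0 < w.re} with hU
  have hUopen : IsOpen U := isOpen_lt continuous_const Complex.continuous_re
  have hUconv : Convex ℝ U := convex_halfSpace_re_gt 0
  set F : ℝ → ℂ → ℂ := fun t w => ∫ r in Ioi (0:ℝ), ((r ^ t : ℝ) : ℂ) * Complex.exp (-(w * r))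
    with hF
  set G : ℂ → ℂ := fun w => w ^ ((ν:ℂ)+1) * F ν w with hG
  have hGderiv : ∀ w ∈ U, HasDerivAt G 0 w := by
    intro w hw
    have hwre : 0 < w.re := hw
    have hw0 : w ≠ 0 := fun h => by simp [h] at hwre
    have h1 : HasDerivAt (fun w : ℂ => w ^ ((ν:ℂ)+1)) (((ν:ℂ)+1) * w ^ ((ν:ℂ)+1-1) * 1) w :=
      (hasDerivAt_id w).cpow_const (Or.inl hwre)
    have h2 : HasDerivAt (F ν) (-F (ν+1) w) w := by
      have := aux_deriv hν hwre
      simpa [hF] using this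
    have h3 := h1.mul h2
    refine h3.congr_deriv (Eq.symm ?_)
    have hsplit : w ^ ((ν:ℂ)+1) = w ^ ((ν:ℂ)+1-1) * w := by
      have he : ((ν:ℂ)+1-1) + 1 = (ν:ℂ)+1 := by ring
      conv_lhs => rw [← he]
      rw [Complex.cpow_add _ _ hw0, Complex.cpow_one]
    have hibp : ((ν:ℂ) + 1) * F ν w = w * F (ν+1) w := by
      have := aux_ibp hν hwre
      simpa [hF] using this
    linear_combination (F (ν+1) w) * hsplit - (w ^ ((ν:ℂ)+1-1)) * hibp
  have hconst : G z = G 1 := by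
    refine hUconv.is_const_of_fderivWithin_eq_zero (𝕜 := ℂ) ?_ ?_ hz (by simp [hU])
    · intro w hw
      exact ((hGderiv w hw).differentiableAt).differentiableWithinAt
    · intro w hw
      rw [fderivWithin_of_isOpen hUopen hw]
      have h := (hGderiv w hw).hasFDerivAt
      have : fderiv ℂ G w = ContinuousLinearMap.smulRight (1 : ℂ →L[ℂ] ℂ) (0:ℂ) := h.fderiv
      rw [this]
      ext x
      simp
  have hG1 : G 1 = (Real.Gamma (ν+1) : ℂ) := by
    rw [hG]
    simp only [Complex.one_cpow, one_mul, hF]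
    have h2 : (fun r : ℝ => ((r ^ ν : ℝ):ℂ) * Complex.exp (-(r:ℂ)))
        = fun r : ℝ => ((r ^ ν * Real.exp (-r) : ℝ) : ℂ) := by
      funext r
      rw [← Complex.ofReal_neg, ← Complex.ofReal_exp, ← Complex.ofReal_mul]
    rw [h2, show (∫ r in Ioi (0:ℝ), ((r ^ ν * Real.exp (-r) : ℝ):ℂ))
        = ((∫ r in Ioi (0:ℝ), r ^ ν * Real.exp (-r) : ℝ):ℂ) from integral_ofReal]
    norm_cast
    have hreal := Real.integral_rpow_mul_exp_neg_mul_Ioi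
      (show (0:ℝ) < ν + 1 by linarith) one_pos
    norm_num at hreal
    rw [← hreal]
  have hz0 : z ≠ 0 := fun h => by rw [h] at hz; simp at hz
  have hzc : z ^ ((ν:ℂ)+1) ≠ 0 := by
    simp [Complex.cpow_eq_zero_iff, hz0]
  have hzF : z ^ ((ν:ℂ)+1) * F ν z = (Real.Gamma (ν+1) : ℂ) := by
    rw [← hG1, ← hconst, hG]
  have : F ν z = (Real.Gamma (ν+1) : ℂ) * z ^ (-((ν:ℂ)+1)) := by
    rw [Complex.cpow_neg, eq_comm, mul_comm, ← hzF]
    field_simp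
  simpa [hF] using this

lemma aux_polar {τ θc c : ℝ} (hτ : 0 < τ) (hθ : θc ∈ Ioc (-Real.pi) Real.pi) :
    ((τ:ℂ) * ((Real.cos θc : ℂ) + (Real.sin θc : ℂ) * Complex.I)) ^ (c:ℂ)
      = ((τ ^ c : ℝ) : ℂ) * Complex.exp (Complex.I * θc * c) := by
  set w : ℂ := (Real.cos θc : ℂ) + (Real.sin θc : ℂ) * Complex.I with hw
  have hwc : w = Complex.cos θc + Complex.sin θc * Complex.I := by
    rw [hw, Complex.ofReal_cos, Complex.ofReal_sin]
  have habs : ‖(τ:ℂ) * w‖ = τ := by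
    rw [norm_mul, Complex.norm_of_nonneg hτ.le, hwc,
      Complex.norm_cos_add_sin_mul_I, mul_one]
  have hz0 : (τ:ℂ) * w ≠ 0 := by
    intro h
    rw [h] at habs
    simp at habs
    exact hτ.ne' habs.symm
  have harg : Complex.arg ((τ:ℂ) * w) = θc := by
    rw [Complex.arg_real_mul w hτ, hwc, Complex.arg_cos_add_sin_mul_I hθ]
  rw [Complex.cpow_def_of_ne_zero hz0, show Complex.log ((τ:ℂ)*w) = (Real.log ‖(τ:ℂ)*w‖ : ℂ) + Complex.arg ((τ:ℂ)*w) * Complex.I from rfl, habs, harg, add_mul, Complex.exp_add]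
  congr 1
  · rw [Real.rpow_def_of_pos hτ, Complex.ofReal_exp, Complex.ofReal_mul]
  · ring_nf

lemma aux_main {ν θ : ℝ} (hν : -1 < ν) (hθ1 : -Real.pi < θ) (hθ2 : θ < 0) {τ : ℝ} (hτ : 0 < τ) :
    (τ:ℂ) * ∫ r in Ioi (0:ℝ), ((r ^ ν : ℝ) : ℂ) *
        Complex.exp ((r:ℂ) * (τ:ℂ) * ((Real.sin θ : ℂ) + (Real.cos θ : ℂ) * Complex.I))
      = (Real.Gamma (ν+1) : ℂ) * Complex.exp (Complex.I * (θ + Real.pi/2) * (ν+1)) *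
        ((τ ^ (-ν) : ℝ) : ℂ) := by
  have hsin : Real.sin θ < 0 := Real.sin_neg_of_neg_of_neg_pi_lt hθ2 hθ1
  set θ' : ℝ := -(θ + Real.pi/2) with hθ'
  set z : ℂ := (τ:ℂ) * ((Real.cos θ' : ℂ) + (Real.sin θ' : ℂ) * Complex.I) with hz
  have hcos' : Real.cos θ' = -Real.sin θ := by
    rw [hθ', Real.cos_neg, Real.cos_add_pi_div_two]
  have hsin' : Real.sin θ' = -Real.cos θ := by
    rw [hθ', Real.sin_neg, Real.sin_add_pi_div_two]
  have hzre : 0 < z.re := by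
    have h : z.re = τ * Real.cos θ' := by
      rw [hz]
      simp [Complex.mul_re, Complex.cos_ofReal_re]
    rw [h, hcos']
    nlinarith
  have hexp : ∀ r : ℝ, (r:ℂ) * (τ:ℂ) * ((Real.sin θ : ℂ) + (Real.cos θ : ℂ) * Complex.I)
      = -(z * r) := by
    intro r
    rw [hz, hcos', hsin']
    push_cast
    ring
  have hint : (∫ r in Ioi (0:ℝ), ((r ^ ν : ℝ) : ℂ) *
      Complex.exp ((r:ℂ) * (τ:ℂ) * ((Real.sin θ : ℂ) + (Real.cos θ : ℂ) * Complex.I)))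
      = ∫ r in Ioi (0:ℝ), ((r ^ ν : ℝ) : ℂ) * Complex.exp (-(z * r)) := by
    refine setIntegral_congr_fun measurableSet_Ioi (fun r hr => by rw [hexp r])
  rw [hint, aux_key hν hzre]
  have hθIoc : θ' ∈ Ioc (-Real.pi) Real.pi := by
    constructor
    · rw [hθ']
      have := Real.pi_pos
      linarith
    · rw [hθ']
      have := Real.pi_pos
      linarith
  have hpow : z ^ (-((ν:ℂ)+1)) = ((τ ^ (-(ν+1)) : ℝ) : ℂ) *
      Complex.exp (Complex.I * (θ + Real.pi/2) * (ν+1)) := by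
    have := aux_polar (c := -(ν+1)) hτ hθIoc
    rw [hz]
    have hc : ((-(ν+1) : ℝ) : ℂ) = -((ν:ℂ)+1) := by push_cast; ring
    rw [← hc, this]
    congr 2
    rw [hθ']
    push_cast
    ring
  rw [hpow]
  have hτpow : (τ:ℂ) * ((τ ^ (-(ν+1)) : ℝ) : ℂ) = ((τ ^ (-ν) : ℝ) : ℂ) := by
    rw [← Complex.ofReal_mul]
    congr 1
    rw [show -ν = 1 + (-(ν+1)) by ring, Real.rpow_add hτ, Real.rpow_one]
  rw [← hτpow]
  ring

/-- norm of the oscillating exponential -/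
lemma aux_normE (θ r τ : ℝ) :
    ‖Complex.exp ((r:ℂ) * (τ:ℂ) * ((Real.sin θ : ℂ) + (Real.cos θ : ℂ) * Complex.I))‖
      = Real.exp (Real.sin θ * r * τ) := by
  rw [Complex.norm_exp]
  congr 1
  simp [Complex.mul_re, Complex.mul_im, Complex.sin_ofReal_re, Complex.cos_ofReal_re]
  ring

/-- integrability of r^ν E on Ioi 0 -/
lemma aux_int_E {ν θ : ℝ} (hν : -1 < ν) (hsin : Real.sin θ < 0) {τ : ℝ} (hτ : 0 < τ) :
    IntegrableOn (fun r : ℝ => ((r ^ ν : ℝ) : ℂ) *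
      Complex.exp ((r:ℂ) * (τ:ℂ) * ((Real.sin θ : ℂ) + (Real.cos θ : ℂ) * Complex.I)))
      (Ioi 0) := by
  have hδ : 0 < τ * -Real.sin θ := by nlinarith
  refine Integrable.mono' (aux_int_real hν hδ) (Measurable.aestronglyMeasurable (by fun_prop)) ?_
  filter_upwards [ae_restrict_mem measurableSet_Ioi] with r hr
  have hr0 : (0:ℝ) < r := hr
  rw [norm_mul, aux_normE, Complex.norm_of_nonneg (Real.rpow_nonneg hr0.le _)]
  have : Real.sin θ * r * τ = -(τ * -Real.sin θ) * r := by ring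
  rw [this]

/-- tail estimate -/
lemma aux_tail {ν θ : ℝ} (hν : -1 < ν) (hsin : Real.sin θ < 0) {η : ℝ} (hη : 0 < η) (M : ℝ) :
    (fun τ : ℝ => (τ:ℂ) * ∫ r in Ici η, ((r ^ ν : ℝ) : ℂ) *
        Complex.exp ((r:ℂ) * (τ:ℂ) * ((Real.sin θ : ℂ) + (Real.cos θ : ℂ) * Complex.I)))
      =O[atTop] fun τ : ℝ => τ ^ (-M) := by
  set s : ℝ := -Real.sin θ with hs
  have hs0 : 0 < s := by rw [hs]; linarith
  set K : ℝ := ∫ r in Ioi (0:ℝ), r ^ ν * Real.exp (-s * r) with hK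
  have hKint := aux_int_real hν hs0
  have hK0 : 0 ≤ K := by
    rw [hK]
    apply setIntegral_nonneg measurableSet_Ioi
    intro r hr
    have hr0 : (0:ℝ) < r := hr
    positivity
  have hc : (0:ℝ) < s * η := mul_pos hs0 hη
  rw [isBigO_iff]
  refine ⟨Real.exp (s * η) * K, ?_⟩
  have htend := tendsto_rpow_mul_exp_neg_mul_atTop_nhds_zero (M + 1) (s * η) hc
  have hev : ∀ᶠ τ : ℝ in atTop, τ ^ (M+1) * Real.exp (-(s*η) * τ) ≤ 1 := by
    have := htend.eventually (eventually_le_nhds (show (0:ℝ) < 1 by norm_num))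
    filter_upwards [this] with τ hτ using hτ
  filter_upwards [hev, eventually_ge_atTop (1:ℝ)] with τ hτ1 hτge
  have hτ0 : (0:ℝ) < τ := by linarith
  have hbound : ‖∫ r in Ici η, ((r ^ ν : ℝ) : ℂ) *
      Complex.exp ((r:ℂ) * (τ:ℂ) * ((Real.sin θ : ℂ) + (Real.cos θ : ℂ) * Complex.I))‖
      ≤ Real.exp (-(s * η) * (τ - 1)) * K := by
    have hIci : Ici η ⊆ Ioi (0:ℝ) := fun x hx => lt_of_lt_of_le hη hx
    have hfi := (aux_int_E hν hsin hτ0).mono_set hIci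
    calc ‖_‖ ≤ ∫ r in Ici η, ‖((r ^ ν : ℝ) : ℂ) *
        Complex.exp ((r:ℂ) * (τ:ℂ) * ((Real.sin θ : ℂ) + (Real.cos θ : ℂ) * Complex.I))‖ :=
          norm_integral_le_integral_norm _
    _ ≤ ∫ r in Ici η, Real.exp (-(s*η) * (τ-1)) * (r ^ ν * Real.exp (-s * r)) := by
        refine setIntegral_mono_on hfi.norm
          (((hKint.mono_set hIci)).const_mul _) measurableSet_Ici ?_
        intro r hr
        have hrη : η ≤ r := hr
        have hr0 : (0:ℝ) < r := lt_of_lt_of_le hη hrη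
        rw [norm_mul, aux_normE, Complex.norm_of_nonneg (Real.rpow_nonneg hr0.le _)]
        have hexp : Real.exp (Real.sin θ * r * τ)
            ≤ Real.exp (-(s*η) * (τ-1)) * Real.exp (-s * r) := by
          rw [← Real.exp_add]
          refine Real.exp_le_exp.mpr ?_
          have hsθ : Real.sin θ = -s := by rw [hs]; ring
          rw [hsθ]
          nlinarith [mul_nonneg (mul_nonneg hs0.le (sub_nonneg.mpr hrη))
            (sub_nonneg.mpr hτge)]
        calc r ^ ν * Real.exp (Real.sin θ * r * τ)
            ≤ r ^ ν * (Real.exp (-(s*η) * (τ-1)) * Real.exp (-s * r)) := by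
              exact mul_le_mul_of_nonneg_left hexp (Real.rpow_nonneg hr0.le _)
        _ = Real.exp (-(s*η) * (τ-1)) * (r ^ ν * Real.exp (-s * r)) := by ring
    _ = Real.exp (-(s*η) * (τ-1)) * ∫ r in Ici η, r ^ ν * Real.exp (-s * r) :=
        integral_const_mul _ _
    _ ≤ Real.exp (-(s*η) * (τ-1)) * K := by
        gcongr
        refine setIntegral_mono_set hKint ?_ (HasSubset.Subset.eventuallyLE hIci)
        filter_upwards [ae_restrict_mem measurableSet_Ioi] with r hr
        have hr0 : (0:ℝ) < r := hr
        positivity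
  rw [norm_mul, Complex.norm_of_nonneg hτ0.le,
    Real.norm_eq_abs, _root_.abs_of_pos (Real.rpow_pos_of_pos hτ0 _)]
  have hττ : τ ^ (M+1) * τ ^ (-M) = τ := by
    rw [← Real.rpow_add hτ0]
    norm_num
  have hstep2 : τ * Real.exp (-(s*η) * τ) ≤ τ ^ (-M) := by
    have h1 : (τ ^ (M+1) * Real.exp (-(s*η) * τ)) * τ ^ (-M)
        = τ * Real.exp (-(s*η) * τ) := by
      rw [mul_right_comm, hττ]
    have h2 : (τ ^ (M+1) * Real.exp (-(s*η) * τ)) * τ ^ (-M) ≤ 1 * τ ^ (-M) :=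
      mul_le_mul_of_nonneg_right hτ1 (Real.rpow_nonneg hτ0.le _)
    rw [h1, one_mul] at h2
    exact h2
  calc τ * ‖∫ r in Ici η, ((r ^ ν : ℝ) : ℂ) *
      Complex.exp ((r:ℂ) * (τ:ℂ) * ((Real.sin θ : ℂ) + (Real.cos θ : ℂ) * Complex.I))‖
      ≤ τ * (Real.exp (-(s * η) * (τ - 1)) * K) := mul_le_mul_of_nonneg_left hbound hτ0.le
  _ = (Real.exp (s*η) * K) * (τ * Real.exp (-(s*η) * τ)) := by
      rw [show -(s*η)*(τ-1) = s*η + -(s*η)*τ by ring, Real.exp_add]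
      ring
  _ ≤ (Real.exp (s*η) * K) * τ ^ (-M) := by
      refine mul_le_mul_of_nonneg_left hstep2 (by positivity)

/-- remainder estimate -/
lemma aux_rem {θ M C η : ℝ} (hM : -1 < M) (hsin : Real.sin θ < 0) (hη : 0 < η) (hC : 0 < C)
    {h : ℝ → ℝ} (hm : AEMeasurable h (volume.restrict (Ioo 0 η)))
    (hb : ∀ r : ℝ, 0 < r → r < η → |h r| ≤ C * r ^ M) :
    (fun τ : ℝ => (τ:ℂ) * ∫ r in Ioo (0:ℝ) η, ((h r : ℝ) : ℂ) *
        Complex.exp ((r:ℂ) * (τ:ℂ) * ((Real.sin θ : ℂ) + (Real.cos θ : ℂ) * Complex.I)))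
      =O[atTop] fun τ : ℝ => τ ^ (-M) := by
  set s : ℝ := -Real.sin θ with hs
  have hs0 : 0 < s := by rw [hs]; linarith
  have hΓ : 0 < Real.Gamma (M+1) := Real.Gamma_pos_of_pos (by linarith)
  rw [isBigO_iff]
  refine ⟨C * Real.Gamma (M+1) * s ^ (-(M+1)), ?_⟩
  filter_upwards [eventually_gt_atTop (0:ℝ)] with τ hτ0
  have hsτ : 0 < s * τ := mul_pos hs0 hτ0
  set φ : ℝ → ℝ := fun r => C * (r ^ M * Real.exp (-(s * τ) * r)) with hφ
  have hφint : IntegrableOn φ (Ioi 0) := (aux_int_real hM hsτ).const_mul C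
  have hφ0 : ∀ᵐ r ∂(volume.restrict (Ioi (0:ℝ))), 0 ≤ φ r := by
    filter_upwards [ae_restrict_mem measurableSet_Ioi] with r hr
    have hr0 : (0:ℝ) < r := hr
    rw [hφ]
    positivity
  have hIoo : Ioo (0:ℝ) η ⊆ Ioi 0 := fun x hx => hx.1
  have hnorm : ∀ r ∈ Ioo (0:ℝ) η, ‖((h r : ℝ) : ℂ) *
      Complex.exp ((r:ℂ) * (τ:ℂ) * ((Real.sin θ : ℂ) + (Real.cos θ : ℂ) * Complex.I))‖
      ≤ φ r := by
    intro r hr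
    rw [norm_mul, aux_normE, Complex.norm_real, Real.norm_eq_abs]
    have h1 : Real.exp (Real.sin θ * r * τ) = Real.exp (-(s * τ) * r) := by
      congr 1
      rw [hs]
      ring
    rw [h1, hφ]
    have := hb r hr.1 hr.2
    have he : (0:ℝ) ≤ Real.exp (-(s * τ) * r) := (Real.exp_pos _).le
    calc |h r| * Real.exp (-(s * τ) * r) ≤ (C * r ^ M) * Real.exp (-(s * τ) * r) :=
          mul_le_mul_of_nonneg_right this he
    _ = C * (r ^ M * Real.exp (-(s * τ) * r)) := by ring
  have hfi : IntegrableOn (fun r : ℝ => ((h r : ℝ) : ℂ) *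
      Complex.exp ((r:ℂ) * (τ:ℂ) * ((Real.sin θ : ℂ) + (Real.cos θ : ℂ) * Complex.I)))
      (Ioo 0 η) := by
    refine Integrable.mono' (hφint.mono_set hIoo) ?_ ?_
    · exact ((Complex.measurable_ofReal.comp_aemeasurable hm).mul
        (Measurable.aemeasurable (by fun_prop))).aestronglyMeasurable
    · filter_upwards [ae_restrict_mem measurableSet_Ioo] with r hr
      exact hnorm r hr
  have hval : ∫ r in Ioi (0:ℝ), φ r
      = C * Real.Gamma (M+1) * (s ^ (-(M+1)) * τ ^ (-(M+1))) := by
    rw [hφ, integral_const_mul]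
    have := Real.integral_rpow_mul_exp_neg_mul_Ioi (show (0:ℝ) < M+1 by linarith) hsτ
    have h2 : (fun t : ℝ => t ^ (M+1-1) * Real.exp (-(s*τ*t)))
        = fun r : ℝ => r ^ M * Real.exp (-(s * τ) * r) := by
      funext t
      norm_num
    rw [h2] at this
    rw [this, one_div, Real.inv_rpow hsτ.le, ← Real.rpow_neg hsτ.le,
      Real.mul_rpow hs0.le hτ0.le]
    ring
  have hττ : τ * τ ^ (-(M+1)) = τ ^ (-M) := by
    rw [show τ * τ ^ (-(M+1)) = τ ^ (1:ℝ) * τ ^ (-(M+1)) by rw [Real.rpow_one],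
      ← Real.rpow_add hτ0]
    norm_num
  rw [norm_mul, Complex.norm_of_nonneg hτ0.le,
    Real.norm_eq_abs, _root_.abs_of_pos (Real.rpow_pos_of_pos hτ0 _)]
  calc τ * ‖∫ r in Ioo (0:ℝ) η, ((h r : ℝ) : ℂ) *
      Complex.exp ((r:ℂ) * (τ:ℂ) * ((Real.sin θ : ℂ) + (Real.cos θ : ℂ) * Complex.I))‖
      ≤ τ * ∫ r in Ioi (0:ℝ), φ r := by
        refine mul_le_mul_of_nonneg_left ?_ hτ0.le
        calc ‖_‖ ≤ ∫ r in Ioo (0:ℝ) η, ‖((h r : ℝ) : ℂ) *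
            Complex.exp ((r:ℂ) * (τ:ℂ) * ((Real.sin θ : ℂ) + (Real.cos θ : ℂ) * Complex.I))‖ :=
              norm_integral_le_integral_norm _
        _ ≤ ∫ r in Ioo (0:ℝ) η, φ r := by
            refine setIntegral_mono_on hfi.norm (hφint.mono_set hIoo)
              measurableSet_Ioo hnorm
        _ ≤ ∫ r in Ioi (0:ℝ), φ r :=
            setIntegral_mono_set hφint hφ0 (HasSubset.Subset.eventuallyLE hIoo)
  _ = C * Real.Gamma (M+1) * s ^ (-(M+1)) * τ ^ (-M) := by
      rw [hval, ← hττ]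
      ring

/-- integrability of remainder times E -/
lemma aux_int_hE {θ M C η τ : ℝ} (hsin : Real.sin θ < 0) (hτ0 : 0 < τ) (hM : -1 < M) (hC : 0 < C)
    {h : ℝ → ℝ} (hm : AEMeasurable h (volume.restrict (Ioo 0 η)))
    (hb : ∀ r : ℝ, 0 < r → r < η → |h r| ≤ C * r ^ M) :
    IntegrableOn (fun r : ℝ => ((h r : ℝ) : ℂ) *
      Complex.exp ((r:ℂ) * (τ:ℂ) * ((Real.sin θ : ℂ) + (Real.cos θ : ℂ) * Complex.I)))
      (Ioo 0 η) := by
  have hsτ : 0 < -Real.sin θ * τ := by nlinarith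
  have hIoo : Ioo (0:ℝ) η ⊆ Ioi 0 := fun x hx => hx.1
  have hbig : IntegrableOn (fun r : ℝ => C * (r ^ M * Real.exp (-(-Real.sin θ * τ) * r)))
      (Ioi 0) := (aux_int_real hM hsτ).const_mul C
  refine Integrable.mono' (hbig.mono_set hIoo) ?_ ?_
  · exact ((Complex.measurable_ofReal.comp_aemeasurable hm).mul
      (Measurable.aemeasurable (by fun_prop))).aestronglyMeasurable
  · filter_upwards [ae_restrict_mem measurableSet_Ioo] with r hr
    rw [norm_mul, aux_normE, Complex.norm_real, Real.norm_eq_abs]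
    have h1 : Real.exp (Real.sin θ * r * τ) = Real.exp (-(-Real.sin θ * τ) * r) := by
      congr 1
      ring
    rw [h1]
    have := hb r hr.1 hr.2
    have he : (0:ℝ) ≤ Real.exp (-(-Real.sin θ * τ) * r) := (Real.exp_pos _).le
    calc |h r| * Real.exp (-(-Real.sin θ * τ) * r)
        ≤ (C * r ^ M) * Real.exp (-(-Real.sin θ * τ) * r) := mul_le_mul_of_nonneg_right this he
    _ = C * (r ^ M * Real.exp (-(-Real.sin θ * τ) * r)) := by ring

/-- per-angle asymptotics -/
lemma aux_angle {η θ : ℝ} (hη : 0 < η) (hθ1 : -Real.pi < θ) (hθ2 : θ < 0)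
    (μ : ℕ → ℝ) (c : ℕ → ℝ) (g : ℝ → ℝ)
    (hm : AEMeasurable g (volume.restrict (Ioo 0 η)))
    (l : ℕ) (hμj : ∀ j ∈ Finset.Icc 1 l, 0 < μ j) (hM : 0 < μ (l+1))
    {C : ℝ} (hC : 0 < C)
    (hb : ∀ r : ℝ, 0 < r → r < η →
      |g r - ∑ j ∈ Finset.Icc 1 l, c j * r ^ (μ j)| ≤ C * r ^ (μ (l + 1))) :
    (fun τ : ℝ => (τ:ℂ) * (∫ r in Ioo (0:ℝ) η, ((g r : ℝ) : ℂ) *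
        Complex.exp ((r:ℂ) * (τ:ℂ) * ((Real.sin θ : ℂ) + (Real.cos θ : ℂ) * Complex.I)))
      - ∑ j ∈ Finset.Icc 1 l, ((c j : ℂ) * (Real.Gamma (μ j + 1) : ℂ) *
          Complex.exp (Complex.I * (θ + Real.pi/2) * (μ j + 1)) * ((τ ^ (-(μ j)) : ℝ) : ℂ)))
    =O[atTop] fun τ : ℝ => τ ^ (-(μ (l + 1))) := by
  have hsin : Real.sin θ < 0 := Real.sin_neg_of_neg_of_neg_pi_lt hθ2 hθ1
  set E : ℝ → ℝ → ℂ := fun τ r =>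
    Complex.exp ((r:ℂ) * (τ:ℂ) * ((Real.sin θ : ℂ) + (Real.cos θ : ℂ) * Complex.I)) with hE
  set R : ℝ → ℝ := fun r => g r - ∑ j ∈ Finset.Icc 1 l, c j * r ^ (μ j) with hR
  have hRm : AEMeasurable R (volume.restrict (Ioo 0 η)) := by
    refine hm.sub (Measurable.aemeasurable ?_)
    exact Finset.measurable_sum _ (fun j _ => by fun_prop)
  have hRb : ∀ r : ℝ, 0 < r → r < η → |R r| ≤ C * r ^ (μ (l+1)) := hb
  -- the eventual pointwise identity
  have hptwise : ∀ τ : ℝ, 0 < τ →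
      (τ:ℂ) * (∫ r in Ioo (0:ℝ) η, ((g r : ℝ) : ℂ) * E τ r)
        - ∑ j ∈ Finset.Icc 1 l, ((c j : ℂ) * (Real.Gamma (μ j + 1) : ℂ) *
            Complex.exp (Complex.I * (θ + Real.pi/2) * (μ j + 1)) * ((τ ^ (-(μ j)) : ℝ) : ℂ))
      = (τ:ℂ) * (∫ r in Ioo (0:ℝ) η, ((R r : ℝ) : ℂ) * E τ r)
        - ∑ j ∈ Finset.Icc 1 l, (c j : ℂ) *
            ((τ:ℂ) * ∫ r in Ici η, ((r ^ (μ j) : ℝ) : ℂ) * E τ r) := by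
    intro τ hτ0
    have hint_j : ∀ j ∈ Finset.Icc 1 l,
        IntegrableOn (fun r : ℝ => ((r ^ (μ j) : ℝ) : ℂ) * E τ r) (Ioi 0) := by
      intro j hj
      exact aux_int_E (by linarith [hμj j hj]) hsin hτ0
    have hIoo : Ioo (0:ℝ) η ⊆ Ioi 0 := fun x hx => hx.1
    have hIci : Ici η ⊆ Ioi (0:ℝ) := fun x hx => lt_of_lt_of_le hη hx
    have hintR : IntegrableOn (fun r : ℝ => ((R r : ℝ) : ℂ) * E τ r) (Ioo 0 η) :=
      aux_int_hE hsin hτ0 (by linarith) hC hRm hRb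
    -- split of the g-integral
    have hsplitg : ∫ r in Ioo (0:ℝ) η, ((g r : ℝ) : ℂ) * E τ r
        = (∫ r in Ioo (0:ℝ) η, ((R r : ℝ) : ℂ) * E τ r)
          + ∑ j ∈ Finset.Icc 1 l, (c j : ℂ) *
              ∫ r in Ioo (0:ℝ) η, ((r ^ (μ j) : ℝ) : ℂ) * E τ r := by
      have hgint : ∀ r : ℝ, ((g r : ℝ) : ℂ) * E τ r
          = ((R r : ℝ) : ℂ) * E τ r
            + ∑ j ∈ Finset.Icc 1 l, (c j : ℂ) * (((r ^ (μ j) : ℝ) : ℂ) * E τ r) := by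
        intro r
        rw [hR]
        push_cast
        simp only [← mul_assoc]
        rw [← Finset.sum_mul]
        ring
      rw [setIntegral_congr_fun measurableSet_Ioo (fun r _ => hgint r)]
      rw [integral_add hintR]
      · congr 1
        rw [integral_finset_sum]
        · exact Finset.sum_congr rfl (fun j hj => integral_const_mul _ _)
        · exact fun j hj => ((hint_j j hj).mono_set hIoo).const_mul _
      · exact integrable_finset_sum _ (fun j hj => ((hint_j j hj).mono_set hIoo).const_mul _)
    -- split Ioi 0 = Ioo ∪ Ici
    have hsplitIoi : ∀ j ∈ Finset.Icc 1 l,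
        ∫ r in Ioo (0:ℝ) η, ((r ^ (μ j) : ℝ) : ℂ) * E τ r
          = (∫ r in Ioi (0:ℝ), ((r ^ (μ j) : ℝ) : ℂ) * E τ r)
            - ∫ r in Ici η, ((r ^ (μ j) : ℝ) : ℂ) * E τ r := by
      intro j hj
      have hdisj : Disjoint (Ioo (0:ℝ) η) (Ici η) :=
        Set.disjoint_left.mpr (fun x hx hx' => absurd hx.2 (not_lt.mpr hx'))
      have hunion := setIntegral_union hdisj measurableSet_Ici
        ((hint_j j hj).mono_set hIoo) ((hint_j j hj).mono_set hIci)
        (f := fun r : ℝ => ((r ^ (μ j) : ℝ) : ℂ) * E τ r)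
      rw [Set.Ioo_union_Ici_eq_Ioi hη] at hunion
      rw [hunion]
      ring
    have hmain : ∀ j ∈ Finset.Icc 1 l,
        (τ:ℂ) * ∫ r in Ioi (0:ℝ), ((r ^ (μ j) : ℝ) : ℂ) * E τ r
          = (Real.Gamma (μ j + 1) : ℂ) *
              Complex.exp (Complex.I * (θ + Real.pi/2) * (μ j + 1)) *
              ((τ ^ (-(μ j)) : ℝ) : ℂ) := by
      intro j hj
      exact aux_main (by linarith [hμj j hj]) hθ1 hθ2 hτ0
    rw [hsplitg]
    rw [mul_add, Finset.mul_sum]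
    have : ∀ j ∈ Finset.Icc 1 l,
        (τ:ℂ) * ((c j : ℂ) * ∫ r in Ioo (0:ℝ) η, ((r ^ (μ j) : ℝ) : ℂ) * E τ r)
          = ((c j : ℂ) * (Real.Gamma (μ j + 1) : ℂ) *
              Complex.exp (Complex.I * (θ + Real.pi/2) * (μ j + 1)) * ((τ ^ (-(μ j)) : ℝ) : ℂ))
            + (c j : ℂ) * ((τ:ℂ) * ∫ r in Ici η, ((r ^ (μ j) : ℝ) : ℂ) * E τ r) *
              (-1) := by
      intro j hj
      rw [hsplitIoi j hj]
      linear_combination (c j : ℂ) * hmain j hj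
    rw [Finset.sum_congr rfl this, Finset.sum_add_distrib]
    simp only [mul_neg_one, Finset.sum_neg_distrib]
    ring
  -- combine the два big-O facts
  have hO1 : (fun τ : ℝ => (τ:ℂ) * (∫ r in Ioo (0:ℝ) η, ((R r : ℝ) : ℂ) * E τ r))
      =O[atTop] fun τ : ℝ => τ ^ (-(μ (l+1))) :=
    aux_rem (by linarith) hsin hη hC hRm hRb
  have hO2 : (fun τ : ℝ => ∑ j ∈ Finset.Icc 1 l, (c j : ℂ) *
      ((τ:ℂ) * ∫ r in Ici η, ((r ^ (μ j) : ℝ) : ℂ) * E τ r))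
      =O[atTop] fun τ : ℝ => τ ^ (-(μ (l+1))) := by
    refine Asymptotics.IsBigO.fun_sum (fun j hj => ?_)
    exact (aux_tail (by linarith [hμj j hj]) hsin hη (μ (l+1))).const_mul_left _
  refine (hO1.sub hO2).congr' ?_ EventuallyEq.rfl
  filter_upwards [eventually_gt_atTop (0:ℝ)] with τ hτ0
  exact (hptwise τ hτ0).symm

lemma aux_exp_I : Complex.exp ((Real.pi : ℂ)/2 * Complex.I) = Complex.I := by
  rw [Complex.exp_mul_I]
  have h1 : ((Real.pi : ℂ)/2) = ((Real.pi/2 : ℝ) : ℂ) := by push_cast; ring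
  rw [h1, ← Complex.ofReal_cos, ← Complex.ofReal_sin, Real.cos_pi_div_two, Real.sin_pi_div_two]
  simp

lemma aux_coef (x m : ℝ) :
    Complex.exp (-(Complex.I) * x) * Complex.exp (Complex.I * (x + Real.pi/2) * (m + 1))
      = Complex.I * Complex.exp (Complex.I * Real.pi * m / 2) * Complex.exp (Complex.I * x * m) := by
  have h2 : Complex.exp ((Real.pi:ℂ)/2 * Complex.I + (Complex.I * Real.pi * m / 2
        + Complex.I * x * m))
      = Complex.I * Complex.exp (Complex.I * Real.pi * m / 2) * Complex.exp (Complex.I * x * m) := by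
    rw [Complex.exp_add, Complex.exp_add, aux_exp_I]
    ring
  rw [← Complex.exp_add, ← h2]
  congr 1
  ring

/-- The analytic core of Proposition 3.2: with `g_p, g_q` admitting the asymptotic
expansions `Σ a_j r^{μ_j}`, `Σ b_j r^{μ_j}` near `r = 0`, the quantity
`J(τ) = −τ e^{−ip} ∫_0^η g_p(r) e^{rτ(sin p + i cos p)} dr
        + τ e^{−iq} ∫_0^η g_q(r) e^{rτ(sin q + i cos q)} dr`
satisfies, for every `l ≥ 1`,
`J(τ) = −i Σ_{j=1}^l e^{iπμ_j/2} Γ(1+μ_j) (a_j e^{ipμ_j} − b_j e^{iqμ_j}) τ^{−μ_j}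
        + O(τ^{−μ_{l+1}})` as `τ → ∞`. -/
theorem stmt_4 (η p q : ℝ) (hη : 0 < η) (hq : -Real.pi < q) (hqp : q < p) (hp : p < 0)
    (μ : ℕ → ℝ) (hμpos : ∀ j, 1 ≤ j → 0 < μ j) (hμmono : ∀ j, 1 ≤ j → μ j < μ (j + 1))
    (a b : ℕ → ℝ) (g_p g_q : ℝ → ℝ)
    (hgpm : AEMeasurable g_p (volume.restrict (Set.Ioo 0 η)))
    (hgqm : AEMeasurable g_q (volume.restrict (Set.Ioo 0 η)))
    (hbound : ∀ l : ℕ, 1 ≤ l → ∃ C > (0:ℝ), ∀ r : ℝ, 0 < r → r < η →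
      |g_p r - ∑ j ∈ Finset.Icc 1 l, a j * r ^ (μ j)| ≤ C * r ^ (μ (l + 1)) ∧
      |g_q r - ∑ j ∈ Finset.Icc 1 l, b j * r ^ (μ j)| ≤ C * r ^ (μ (l + 1))) :
    ∀ l : ℕ, 1 ≤ l →
      (fun τ : ℝ =>
        (-(τ : ℂ) * Complex.exp (-(Complex.I) * p) *
            (∫ r in Set.Ioo (0:ℝ) η, ((g_p r : ℝ) : ℂ) *
              Complex.exp ((r : ℂ) * (τ : ℂ) * ((Real.sin p : ℂ) + (Real.cos p : ℂ) * Complex.I)))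
          + (τ : ℂ) * Complex.exp (-(Complex.I) * q) *
            (∫ r in Set.Ioo (0:ℝ) η, ((g_q r : ℝ) : ℂ) *
              Complex.exp ((r : ℂ) * (τ : ℂ) * ((Real.sin q : ℂ) + (Real.cos q : ℂ) * Complex.I))))
        - (-(Complex.I) * ∑ j ∈ Finset.Icc 1 l,
            Complex.exp (Complex.I * Real.pi * μ j / 2) * (Real.Gamma (1 + μ j) : ℂ) *
              ((a j : ℂ) * Complex.exp (Complex.I * p * μ j)
                - (b j : ℂ) * Complex.exp (Complex.I * q * μ j)) *
              ((τ ^ (-(μ j)) : ℝ) : ℂ)))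
      =O[atTop] fun τ : ℝ => τ ^ (-(μ (l + 1))) := by

  intro l hl
  obtain ⟨C, hC, hCb⟩ := hbound l hl
  have hμj : ∀ j ∈ Finset.Icc 1 l, 0 < μ j := by
    intro j hj
    exact hμpos j (Finset.mem_Icc.mp hj).1
  have hM : 0 < μ (l+1) := hμpos (l+1) (by omega)
  have hpπ : -Real.pi < p := lt_trans hq hqp
  have hq0 : q < 0 := lt_trans hqp hp
  have hA := aux_angle hη hpπ hp μ a g_p hgpm l hμj hM hC (fun r h1 h2 => (hCb r h1 h2).1)
  have hB := aux_angle hη hq hq0 μ b g_q hgqm l hμj hM hC (fun r h1 h2 => (hCb r h1 h2).2)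
  have hO := (hA.const_mul_left (-Complex.exp (-(Complex.I) * p))).add
    (hB.const_mul_left (Complex.exp (-(Complex.I) * q)))
  refine hO.congr' (Eventually.of_forall (fun τ => ?_)) EventuallyEq.rfl
  -- pointwise algebraic identity
  have hsum : Complex.exp (-(Complex.I) * p) * (∑ j ∈ Finset.Icc 1 l, ((a j : ℂ) *
        (Real.Gamma (μ j + 1) : ℂ) * Complex.exp (Complex.I * (p + Real.pi/2) * (μ j + 1)) *
        ((τ ^ (-(μ j)) : ℝ) : ℂ)))
      - Complex.exp (-(Complex.I) * q) * (∑ j ∈ Finset.Icc 1 l, ((b j : ℂ) *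
        (Real.Gamma (μ j + 1) : ℂ) * Complex.exp (Complex.I * (q + Real.pi/2) * (μ j + 1)) *
        ((τ ^ (-(μ j)) : ℝ) : ℂ)))
      = Complex.I * ∑ j ∈ Finset.Icc 1 l,
          Complex.exp (Complex.I * Real.pi * μ j / 2) * (Real.Gamma (1 + μ j) : ℂ) *
            ((a j : ℂ) * Complex.exp (Complex.I * p * μ j)
              - (b j : ℂ) * Complex.exp (Complex.I * q * μ j)) *
            ((τ ^ (-(μ j)) : ℝ) : ℂ) := by
    rw [Finset.mul_sum, Finset.mul_sum, Finset.mul_sum, ← Finset.sum_sub_distrib]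
    refine Finset.sum_congr rfl (fun j hj => ?_)
    have hΓ : Real.Gamma (1 + μ j) = Real.Gamma (μ j + 1) := by rw [add_comm]
    rw [hΓ]
    linear_combination ((a j : ℂ) * (Real.Gamma (μ j + 1) : ℂ) * ((τ ^ (-(μ j)) : ℝ) : ℂ)) *
        aux_coef p (μ j)
      - ((b j : ℂ) * (Real.Gamma (μ j + 1) : ℂ) * ((τ ^ (-(μ j)) : ℝ) : ℂ)) *
        aux_coef q (μ j)
  linear_combination hsum
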